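/- Let f(z) = C z^m e^{αz} ∏_j (1 + γ_j z) be a Laguerre entire function with C > 0, m = 0, α ≥ 0, γ_j ≥ 0 decreasing, ∑ γ_j < ∞. If (D^k log f)(0) = 0 for all k ≥ 2, then f(z) = C exp(az) for some a ≥ 0. -/

import Mathlib

/-- For a Laguerre entire function f(z) = C e^{αz} ∏ (1+γ_j z) with C > 0, α ≥ 0,
γ_j decreasing, nonnegative, summable: if the logarithm φ of f near 0 has
(D^k φ)(0) = 0 for all k ≥ 2, then f(z) = C exp(a z) for some a ≥ 0. -/
theorem stmt4 (C α : ℝ) (γ : ℕ → ℝ) (hC : 0 < C) (hα : 0 ≤ α)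
    (hγ : ∀ j, 0 ≤ γ j) (hmono : Antitone γ) (hsum : Summable γ)
    (φ : ℂ → ℂ) (hφa : AnalyticAt ℂ φ 0)
    (hφ : ∀ᶠ z in nhds (0 : ℂ), Complex.exp (φ z)
        = (C : ℂ) * Complex.exp ((α : ℂ) * z) * ∏' j, (1 + (γ j : ℂ) * z))
    (hvanish : ∀ k : ℕ, 2 ≤ k → iteratedDeriv k φ 0 = 0) :
    ∃ a : ℝ, 0 ≤ a ∧ ∀ z : ℂ,
      (C : ℂ) * Complex.exp ((α : ℂ) * z) * (∏' j, (1 + (γ j : ℂ) * z))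
        = (C : ℂ) * Complex.exp ((a : ℂ) * z) := by
  classical
  -- Step 1: φ is affine near 0
  obtain ⟨p, r, hpr⟩ := hφa
  have hr : 0 < r := hpr.r_pos
  have hdiff : DifferentiableOn ℂ φ (EMetric.ball (0 : ℂ) r) := hpr.differentiableOn
  have haff : ∀ᶠ z in nhds (0 : ℂ), φ z = φ 0 + deriv φ 0 * z := by
    filter_upwards [EMetric.ball_mem_nhds (0 : ℂ) hr] with z hz
    have h1 := Complex.hasSum_taylorSeries_on_emetric_ball hdiff hz
    have h2 : HasSum (fun n : ℕ ↦ (n.factorial : ℂ)⁻¹ • (z - 0) ^ n • iteratedDeriv n φ 0)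
        (∑ n ∈ Finset.range 2, (n.factorial : ℂ)⁻¹ • (z - 0) ^ n • iteratedDeriv n φ 0) := by
      apply hasSum_sum_of_ne_finset_zero
      intro n hn
      rw [hvanish n (Nat.not_lt.mp (fun h => hn (Finset.mem_range.mpr h))), smul_zero, smul_zero]
    have key := h1.unique h2
    simp only [Finset.sum_range_succ, Finset.sum_range_zero, zero_add, sub_zero, pow_zero,
      pow_one, Nat.factorial_zero, Nat.factorial_one, Nat.cast_one, inv_one, one_smul,
      iteratedDeriv_zero, iteratedDeriv_one, smul_eq_mul] at key
    rw [key]; ring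
  -- value at 0
  have h00 := hφ.self_of_nhds
  have hC0 : Complex.exp (φ 0) = (C : ℂ) := by
    simpa using h00
  set b := deriv φ 0 with hb
  -- Step 2: the product equals exp ((b - α) z) near 0
  have hP : ∀ᶠ z in nhds (0 : ℂ),
      (∏' j, (1 + (γ j : ℂ) * z)) = Complex.exp ((b - α) * z) := by
    filter_upwards [hφ, haff] with z h1 h2
    have hne : (C : ℂ) * Complex.exp ((α : ℂ) * z) ≠ 0 :=
      mul_ne_zero (by exact_mod_cast hC.ne') (Complex.exp_ne_zero _)
    apply mul_left_cancel₀ hne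
    have e1 : (b : ℂ) * z = (α : ℂ) * z + (b - α) * z := by ring
    calc (C : ℂ) * Complex.exp ((α : ℂ) * z) * (∏' j, (1 + (γ j : ℂ) * z))
        = Complex.exp (φ z) := h1.symm
      _ = Complex.exp (φ 0) * Complex.exp (b * z) := by rw [h2, Complex.exp_add]
      _ = (C : ℂ) * Complex.exp (b * z) := by rw [hC0]
      _ = (C : ℂ) * Complex.exp ((α : ℂ) * z) * Complex.exp ((b - α) * z) := by
          rw [e1, Complex.exp_add, mul_assoc]
  -- Step 3: γ 0 = 0
  have hγ0 : γ 0 = 0 := by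
    by_contra hne0
    have hγ0pos : 0 < γ 0 := lt_of_le_of_ne (hγ 0) (Ne.symm hne0)
    obtain ⟨ε, hε, hball⟩ := Metric.eventually_nhds_iff.mp hP
    set x : ℝ := min (ε / 2) (1 / (2 * γ 0)) with hxdef
    have hxpos : 0 < x := lt_min (by linarith) (by positivity)
    have hxε : x < ε := lt_of_le_of_lt (min_le_left _ _) (by linarith)
    have hxhalf : ∀ j, γ j * x ≤ 1 / 2 := by
      intro j
      have h1 : γ j ≤ γ 0 := hmono (Nat.zero_le j)
      have h2 : x ≤ 1 / (2 * γ 0) := min_le_right _ _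
      calc γ j * x ≤ γ 0 * (1 / (2 * γ 0)) :=
            mul_le_mul h1 h2 hxpos.le (hγ 0)
        _ = 1 / 2 := by field_simp
    have hxnn : ∀ j, 0 ≤ γ j * x := fun j => mul_nonneg (hγ j) hxpos.le
    -- summability of logs
    have hsx : Summable (fun j => γ j * x) := hsum.mul_right x
    have hlogP : Summable (fun j => Real.log (1 + γ j * x)) := by
      refine Summable.of_nonneg_of_le (fun j => Real.log_nonneg (by linarith [hxnn j]))
        (fun j => ?_) hsx
      have := Real.log_le_sub_one_of_pos (x := 1 + γ j * x) (by linarith [hxnn j])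
      linarith
    have hlogM : Summable (fun j => Real.log (1 - γ j * x)) := by
      rw [← summable_neg_iff]
      refine Summable.of_nonneg_of_le (fun j => ?_) (fun j => ?_) (hsx.mul_left 2)
      · have h3 : (0 : ℝ) < 1 - γ j * x := by linarith [hxhalf j]
        simp only [neg_nonneg]
        exact Real.log_nonpos (by linarith [hxnn j]) (by linarith [hxnn j])
      · have h1 := hxnn j
        have h2 := hxhalf j
        have h3 : (0 : ℝ) < 1 - γ j * x := by linarith
        have h4 : Real.log (1 - γ j * x)⁻¹ = -Real.log (1 - γ j * x) := Real.log_inv _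
        have h5 := Real.log_le_sub_one_of_pos (inv_pos.mpr h3)
        have hinv : (1 - γ j * x) * (1 - γ j * x)⁻¹ = 1 := mul_inv_cancel₀ h3.ne'
        have h6 : (1 - γ j * x)⁻¹ ≤ 1 + 2 * (γ j * x) := by
          nlinarith [mul_nonneg h1 (by linarith : (0:ℝ) ≤ 1 - 2 * (γ j * x))]
        rw [← h4] at *
        linarith
    -- multipliability over ℝ
    have mP : Multipliable (fun j => (1 + γ j * x : ℝ)) :=
      Real.multipliable_of_summable_log
        (fun j => by show (0:ℝ) < 1 + γ j * x; linarith [hxnn j]) hlogP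
    have mM : Multipliable (fun j => (1 - γ j * x : ℝ)) :=
      Real.multipliable_of_summable_log
        (fun j => by show (0:ℝ) < 1 - γ j * x; linarith [hxhalf j]) hlogM
    set A := ∏' j, (1 + γ j * x : ℝ) with hA
    set B := ∏' j, (1 - γ j * x : ℝ) with hB
    have hP : HasProd (fun j => (1 + γ j * x : ℝ)) A := mP.hasProd
    have hM : HasProd (fun j => (1 - γ j * x : ℝ)) B := mM.hasProd
    -- complex versions
    have hPC : HasProd (fun j => (1 + (γ j : ℂ) * (x : ℂ))) (A : ℂ) := by
      have h := hP.map Complex.ofRealHom.toMonoidHom Complex.continuous_ofReal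
      convert h using 1
      funext j
      simp only [Function.comp_apply, RingHom.toMonoidHom_eq_coe, MonoidHom.coe_coe,
        Complex.ofRealHom_eq_coe]
      push_cast
      ring
      rfl
    have hMC : HasProd (fun j => (1 + (γ j : ℂ) * (-(x : ℂ)))) (B : ℂ) := by
      have h := hM.map Complex.ofRealHom.toMonoidHom Complex.continuous_ofReal
      convert h using 1
      funext j
      simp only [Function.comp_apply, RingHom.toMonoidHom_eq_coe, MonoidHom.coe_coe,
        Complex.ofRealHom_eq_coe]
      push_cast
      ring
      rfl
    -- evaluate the product identity at x and -x
    have hx1 : (∏' j, (1 + (γ j : ℂ) * (x : ℂ))) = Complex.exp ((b - α) * (x : ℂ)) := by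
      apply hball
      rw [dist_zero_right, Complex.norm_real, Real.norm_eq_abs, abs_of_pos hxpos]
      exact hxε
    have hx2 : (∏' j, (1 + (γ j : ℂ) * (-(x : ℂ)))) = Complex.exp ((b - α) * (-(x : ℂ))) := by
      apply hball
      rw [dist_zero_right, norm_neg, Complex.norm_real, Real.norm_eq_abs, abs_of_pos hxpos]
      exact hxε
    have hAC : (A : ℂ) = Complex.exp ((b - α) * (x : ℂ)) := by rw [← hPC.tprod_eq]; exact hx1
    have hBC : (B : ℂ) = Complex.exp ((b - α) * (-(x : ℂ))) := by rw [← hMC.tprod_eq]; exact hx2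
    have hAB1 : A * B = 1 := by
      have : ((A * B : ℝ) : ℂ) = 1 := by
        push_cast
        rw [hAC, hBC, ← Complex.exp_add]
        norm_num
      exact_mod_cast this
    -- the combined product
    have hABprod : HasProd (fun j => (1 - (γ j * x) ^ 2 : ℝ)) (A * B) := by
      have h := hP.mul hM
      have he : (fun j => (1 + γ j * x) * (1 - γ j * x)) = fun j => (1 - (γ j * x) ^ 2 : ℝ) := by
        funext j; ring
      rwa [he] at h
    have hfac : ∀ j, 0 ≤ 1 - (γ j * x) ^ 2 ∧ 1 - (γ j * x) ^ 2 ≤ 1 := by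
      intro j
      constructor
      · nlinarith [hxhalf j, hxnn j]
      · nlinarith [sq_nonneg (γ j * x)]
    have hle : A * B ≤ 1 - (γ 0 * x) ^ 2 := by
      apply le_of_tendsto hABprod.tendsto_prod_nat
      filter_upwards [Filter.eventually_ge_atTop 1] with n hn
      obtain ⟨k, rfl⟩ := Nat.exists_eq_add_of_le hn
      rw [add_comm, Finset.prod_range_succ']
      calc (∏ i ∈ Finset.range k, (1 - (γ (i + 1) * x) ^ 2)) * (1 - (γ 0 * x) ^ 2)
          ≤ 1 * (1 - (γ 0 * x) ^ 2) := by
            apply mul_le_mul_of_nonneg_right _ (hfac 0).1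
            exact Finset.prod_le_one (fun i _ => (hfac _).1) (fun i _ => (hfac _).2)
        _ = 1 - (γ 0 * x) ^ 2 := one_mul _
    rw [hAB1] at hle
    nlinarith [mul_pos hγ0pos hxpos]
  -- Step 4: conclude
  have hγall : ∀ j, γ j = 0 := fun j => le_antisymm (hγ0 ▸ hmono (Nat.zero_le j)) (hγ j)
  refine ⟨α, hα, fun z => ?_⟩
  simp [hγall]
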